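/- Let A = (A_1, A_2, (1/n)I, …, (1/n)I) be a doubly stochastic n-tuple, i.e. A_1, A_2 are positive semidefinite hermitian with tr A_1 = tr A_2 = 1 and A_1 + A_2 = (2/n)I. Then the mixed discriminant satisfies D(A) = n!/n^n + (n−2)!/n^{n−2} · tr((A_1 − (1/n)I)(A_1 − (1/n)I)*). -/

import Mathlib

open Matrix BigOperators Finset ComplexOrder Nat

/-- The mixed discriminant of an `n`-tuple of complex `n × n` matrices:
`D(A₁,…,Aₙ) = Σ_{σ,τ ∈ Sₙ} sgn(στ) Π_i A_i (σ i) (τ i)`. -/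
noncomputable def mixedDisc {n : ℕ} (A : Fin n → Matrix (Fin n) (Fin n) ℂ) : ℂ :=
  ∑ σ : Equiv.Perm (Fin n), ∑ τ : Equiv.Perm (Fin n),
    ((Equiv.Perm.sign (σ * τ) : ℤ) : ℂ) * ∏ i : Fin n, A i (σ i) (τ i)

/-- An `n`-tuple of hermitian matrices is doubly stochastic if each `A i` is positive
semidefinite, each has trace `1`, and they sum to the identity. -/
def DoublyStochasticTuple {n : ℕ} (A : Fin n → Matrix (Fin n) (Fin n) ℂ) : Prop :=
  (∀ i, (A i).PosSemidef) ∧ (∀ i, (A i).trace = 1) ∧ ∑ i, A i = 1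

lemma sum_perm_pair_aux (m : ℕ) (H : Fin (m+2) → Fin (m+2) → ℂ) (hH : ∀ j, H j j = 0) :
    ∑ σ : Equiv.Perm (Fin (m+2)), H (σ 0) (σ 1) = (m ! : ℂ) * ∑ j, ∑ l, H j l := by
  rw [← Equiv.sum_comp (Equiv.Perm.decomposeFin (n := m+1)).symm
    (fun σ => H (σ 0) (σ 1))]
  rw [Fintype.sum_prod_type]
  have key : ∀ p : Fin (m+2),
      (∑ e : Equiv.Perm (Fin (m+1)),
        H (Equiv.Perm.decomposeFin.symm (p, e) 0) (Equiv.Perm.decomposeFin.symm (p, e) 1))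
      = (m ! : ℂ) * ∑ l, H p l := by
    intro p
    simp only [Equiv.Perm.decomposeFin_symm_apply_zero, Equiv.Perm.decomposeFin_symm_apply_one]
    rw [← Equiv.sum_comp (Equiv.Perm.decomposeFin (n := m)).symm
      (fun e => H p (Equiv.swap 0 p ((e 0)).succ))]
    rw [Fintype.sum_prod_type]
    have inner : ∀ q : Fin (m+1),
        (∑ e : Equiv.Perm (Fin m),
          H p (Equiv.swap 0 p ((Equiv.Perm.decomposeFin.symm (q, e) 0)).succ))
        = (m ! : ℂ) • H p (Equiv.swap 0 p q.succ) := by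
      intro q
      simp only [Equiv.Perm.decomposeFin_symm_apply_zero]
      rw [Finset.sum_const, Finset.card_univ, Fintype.card_perm, Fintype.card_fin]
      simp [nsmul_eq_mul]
    simp only [inner, smul_eq_mul, ← Finset.mul_sum]
    congr 1
    -- ∑ q : Fin (m+1), H p (swap 0 p q.succ) = ∑ l, H p l
    rw [← Finset.sum_erase (Finset.univ) (h := hH p)]
    refine Finset.sum_bij (fun q _ => Equiv.swap 0 p q.succ) ?_ ?_ ?_ ?_
    · intro q _
      refine Finset.mem_erase.mpr ⟨?_, Finset.mem_univ _⟩
      intro h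
      have h2 := congrArg (Equiv.swap 0 p) h
      rw [Equiv.swap_apply_self, Equiv.swap_apply_right] at h2
      exact Fin.succ_ne_zero q h2
    · intro a _ b _ h
      exact Fin.succ_injective _ ((Equiv.swap 0 p).injective h)
    · intro l hl
      have hlp : l ≠ p := (Finset.mem_erase.mp hl).1
      have h0 : Equiv.swap 0 p l ≠ 0 := by
        intro h
        apply hlp
        have h2 := congrArg (Equiv.swap 0 p) h
        rw [Equiv.swap_apply_self, Equiv.swap_apply_left] at h2
        exact h2
      obtain ⟨q, hq⟩ := Fin.exists_succ_eq_of_ne_zero h0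
      exact ⟨q, Finset.mem_univ _, by simp only [hq]; simp⟩
    · intros; rfl
  simp only [key]
  rw [← Finset.mul_sum]

lemma perm_classify (m : ℕ) (ρ : Equiv.Perm (Fin (m+2)))
    (hfix : ∀ i : Fin (m+2), 2 ≤ (i : ℕ) → ρ i = i) :
    ρ = 1 ∨ ρ = Equiv.swap 0 1 := by
  have key : ∀ i : Fin (m+2), (i:ℕ) < 2 → ((ρ i : ℕ) < 2) := by
    intro i hi
    by_contra hge
    have h2 : ρ (ρ i) = ρ i := hfix (ρ i) (le_of_not_gt hge)
    have := ρ.injective h2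
    rw [this] at hge
    omega
  have h0 : (0 : Fin (m+2)) = ⟨0, by omega⟩ := rfl
  have h1 : (1 : Fin (m+2)) = ⟨1, by omega⟩ := rfl
  have hρ0 := key 0 (by simp)
  have hρ1 := key 1 (by simp)
  have hne : ρ 0 ≠ ρ 1 := fun h => by
    have := ρ.injective h
    rw [h0, h1] at this
    exact absurd (congrArg Fin.val this) (by simp)
  by_cases hc : ρ 0 = 0
  · left
    have hc1 : ρ 1 = 1 := by
      have : (ρ 1 : ℕ) = 0 ∨ (ρ 1 : ℕ) = 1 := by omega
      rcases this with h | h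
      · exact absurd (Fin.ext (by rw [h, hc, h0] : (ρ 1 : ℕ) = ((ρ 0 : Fin (m+2)) : ℕ))) hne.symm
      · exact Fin.ext (by rw [h, h1])
    ext i
    rcases Nat.lt_or_ge (i : ℕ) 2 with h | h
    · have : (i:ℕ) = 0 ∨ (i:ℕ) = 1 := by omega
      rcases this with h' | h'
      · have : i = 0 := Fin.ext (by rw [h', h0])
        simp [this, hc]
      · have : i = 1 := Fin.ext (by rw [h', h1])
        simp [this, hc1]
    · simp [hfix i h]
  · right
    have hc0 : ρ 0 = 1 := by
      have : (ρ 0 : ℕ) = 0 ∨ (ρ 0 : ℕ) = 1 := by omega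
      rcases this with h | h
      · exact absurd (Fin.ext (by rw [h, h0])) hc
      · exact Fin.ext (by rw [h, h1])
    have hc1 : ρ 1 = 0 := by
      have : (ρ 1 : ℕ) = 0 ∨ (ρ 1 : ℕ) = 1 := by omega
      rcases this with h | h
      · exact Fin.ext (by rw [h, h0])
      · exact absurd (Fin.ext (by rw [hc0, h, h1] : ((ρ 0 : Fin (m+2)) : ℕ) = (ρ 1 : ℕ))) hne
    ext i
    rcases Nat.lt_or_ge (i : ℕ) 2 with h | h
    · have : (i:ℕ) = 0 ∨ (i:ℕ) = 1 := by omega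
      rcases this with h' | h'
      · have : i = 0 := Fin.ext (by rw [h', h0])
        simp [this, hc0, Equiv.swap_apply_left]
      · have : i = 1 := Fin.ext (by rw [h', h1])
        simp [this, hc1, Equiv.swap_apply_right]
    · have hne0 : i ≠ 0 := fun hh => by rw [hh] at h; simp at h
      have hne1 : i ≠ 1 := fun hh => by rw [hh] at h; simp [Fin.val_one] at h
      simp [hfix i h, Equiv.swap_apply_of_ne_of_ne hne0 hne1]


theorem mixedDisc_main {m : ℕ}
    (A : Fin (m+2) → Matrix (Fin (m+2)) (Fin (m+2)) ℂ)
    (hA : (∀ i, (A i).PosSemidef) ∧ (∀ i, (A i).trace = 1) ∧ ∑ i, A i = 1)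
    (htail : ∀ i : Fin (m+2), 2 ≤ (i : ℕ) →
      A i = ((m+2 : ℕ) : ℂ)⁻¹ • (1 : Matrix (Fin (m+2)) (Fin (m+2)) ℂ)) :
    (∑ σ : Equiv.Perm (Fin (m+2)), ∑ τ : Equiv.Perm (Fin (m+2)),
      ((Equiv.Perm.sign (σ * τ) : ℤ) : ℂ) * ∏ i : Fin (m+2), A i (σ i) (τ i)) =
      ((((m+2) ! : ℝ) / ((m+2 : ℕ) : ℝ) ^ (m+2) : ℝ) : ℂ) +
        ((((m)! : ℝ) / ((m+2 : ℕ) : ℝ) ^ m : ℝ) : ℂ) *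
          ((A 0 - ((m+2:ℕ) : ℂ)⁻¹ • 1) * (A 0 - ((m+2:ℕ) : ℂ)⁻¹ • 1)ᴴ).trace := by
  set k : ℂ := ((m+2 : ℕ) : ℂ)⁻¹ with hk
  have hN : ((m+2:ℕ) : ℂ) ≠ 0 := Nat.cast_ne_zero.mpr (by omega)
  have hkN : k * ((m+2:ℕ) : ℂ) = 1 := inv_mul_cancel₀ hN
  have h01 : (0 : Fin (m+2)) ≠ 1 := by simp [Fin.ext_iff]
  have h1swap : (1 : Equiv.Perm (Fin (m+2))) ≠ Equiv.swap 0 1 := by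
    intro h
    have := Equiv.ext_iff.mp h 0
    rw [Equiv.Perm.one_apply, Equiv.swap_apply_left] at this
    exact h01 this
  have htail' : ∀ i : Fin m, A i.succ.succ = k • 1 := by
    intro i
    exact htail i.succ.succ (by simp [Fin.val_succ])
  -- the diagonal entries of tail matrices
  have hdiag : ∀ (i : Fin m) (a : Fin (m+2)), A i.succ.succ a a = k := by
    intro i a
    rw [htail' i]
    simp [Matrix.smul_apply, Matrix.one_apply]
  -- Step 1: reindex inner sum and reduce it
  have step1 : ∀ σ : Equiv.Perm (Fin (m+2)),
      (∑ τ : Equiv.Perm (Fin (m+2)),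
        ((Equiv.Perm.sign (σ * τ) : ℤ) : ℂ) * ∏ i : Fin (m+2), A i (σ i) (τ i))
      = (∏ i : Fin (m+2), A i (σ i) (σ i))
        - ∏ i : Fin (m+2), A i (σ i) (σ (Equiv.swap 0 1 i)) := by
    intro σ
    rw [← Fintype.sum_equiv (Equiv.mulLeft σ)
      (fun ρ => ((Equiv.Perm.sign (σ * (σ * ρ)) : ℤ) : ℂ) *
        ∏ i : Fin (m+2), A i (σ i) ((σ * ρ) i))
      (fun τ => ((Equiv.Perm.sign (σ * τ) : ℤ) : ℂ) * ∏ i : Fin (m+2), A i (σ i) (τ i))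
      (fun ρ => rfl)]
    have hsgn : ∀ ρ : Equiv.Perm (Fin (m+2)),
        ((Equiv.Perm.sign (σ * (σ * ρ)) : ℤ) : ℂ) = ((Equiv.Perm.sign ρ : ℤ) : ℂ) := by
      intro ρ
      rw [← mul_assoc, _root_.map_mul, _root_.map_mul, Int.units_mul_self, one_mul]
    simp only [hsgn, Equiv.Perm.coe_mul, Function.comp_apply]
    have hzero : ∀ ρ ∈ (Finset.univ : Finset (Equiv.Perm (Fin (m+2)))),
        ρ ∉ ({1, Equiv.swap 0 1} : Finset (Equiv.Perm (Fin (m+2)))) →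
        ((Equiv.Perm.sign ρ : ℤ) : ℂ) * ∏ i : Fin (m+2), A i (σ i) (σ (ρ i)) = 0 := by
      intro ρ _ hmem
      simp only [Finset.mem_insert, Finset.mem_singleton, not_or] at hmem
      have : ¬ ∀ i : Fin (m+2), 2 ≤ (i : ℕ) → ρ i = i := by
        intro hfix
        rcases perm_classify m ρ hfix with h | h
        exacts [hmem.1 h, hmem.2 h]
      push_neg at this
      obtain ⟨i, hi2, hine⟩ := this
      have hfac : A i (σ i) (σ (ρ i)) = 0 := by
        rw [htail i hi2]
        have : σ i ≠ σ (ρ i) := fun h => hine (σ.injective h).symm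
        simp [Matrix.smul_apply, Matrix.one_apply, this]
      rw [Finset.prod_eq_zero (Finset.mem_univ i) hfac, mul_zero]
    rw [← Finset.sum_subset (Finset.subset_univ ({1, Equiv.swap 0 1} : Finset _))
      (fun ρ h1 h2 => hzero ρ h1 h2)]
    rw [Finset.sum_pair h1swap]
    simp only [Equiv.Perm.sign_one, Equiv.Perm.one_apply, Units.val_one, Int.cast_one, one_mul,
      Equiv.Perm.sign_swap h01, Units.val_neg, Units.val_one, Int.cast_neg, Int.cast_one]
    ring
  simp only [step1]
  -- Step 2: compute the two products
  have hprod1 : ∀ σ : Equiv.Perm (Fin (m+2)),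
      (∏ i : Fin (m+2), A i (σ i) (σ i))
      = A 0 (σ 0) (σ 0) * (A 1 (σ 1) (σ 1) * k ^ m) := by
    intro σ
    rw [Fin.prod_univ_succ, Fin.prod_univ_succ, Fin.succ_zero_eq_one]
    have htl : ∏ i : Fin m, A i.succ.succ (σ i.succ.succ) (σ i.succ.succ) = k ^ m := by
      rw [Finset.prod_congr rfl (fun i _ => hdiag i (σ i.succ.succ)), Finset.prod_const,
        Finset.card_univ, Fintype.card_fin]
    rw [htl]
  have hswapfix : ∀ i : Fin m, Equiv.swap (0 : Fin (m+2)) 1 i.succ.succ = i.succ.succ := by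
    intro i
    apply Equiv.swap_apply_of_ne_of_ne
    · exact Fin.succ_ne_zero _
    · intro h
      have := congrArg Fin.val h
      simp [Fin.val_succ] at this
  have hprod2 : ∀ σ : Equiv.Perm (Fin (m+2)),
      (∏ i : Fin (m+2), A i (σ i) (σ (Equiv.swap 0 1 i)))
      = A 0 (σ 0) (σ 1) * (A 1 (σ 1) (σ 0) * k ^ m) := by
    intro σ
    rw [Fin.prod_univ_succ, Fin.prod_univ_succ]
    simp only [Fin.succ_zero_eq_one, Equiv.swap_apply_left, Equiv.swap_apply_right]
    have htl : ∏ i : Fin m,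
        A i.succ.succ (σ i.succ.succ) (σ (Equiv.swap (0 : Fin (m+2)) 1 i.succ.succ)) = k ^ m := by
      have hfac : ∀ i : Fin m,
          A i.succ.succ (σ i.succ.succ) (σ (Equiv.swap (0 : Fin (m+2)) 1 i.succ.succ)) = k :=
        fun i => by rw [hswapfix i]; exact hdiag i (σ i.succ.succ)
      rw [Finset.prod_congr rfl (fun i _ => hfac i), Finset.prod_const,
        Finset.card_univ, Fintype.card_fin]
    rw [htl]
  simp only [hprod1, hprod2]
  -- Step 3: sum over σ
  have hH : ∀ j : Fin (m+2),
      (fun j l => A 0 j j * A 1 l l - A 0 j l * A 1 l j : Fin (m+2) → Fin (m+2) → ℂ) j j = 0 := by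
    intro j; ring
  have step3 :
      (∑ σ : Equiv.Perm (Fin (m+2)),
        (A 0 (σ 0) (σ 0) * (A 1 (σ 1) (σ 1) * k ^ m)
          - A 0 (σ 0) (σ 1) * (A 1 (σ 1) (σ 0) * k ^ m)))
      = k ^ m * ((m ! : ℂ) *
          ∑ j, ∑ l, (A 0 j j * A 1 l l - A 0 j l * A 1 l j)) := by
    rw [← sum_perm_pair_aux m _ hH, Finset.mul_sum]
    exact Finset.sum_congr rfl (fun σ _ => by ring)
  rw [step3]
  -- Step 4: the double sum in terms of traces
  have trA0 : (A 0).trace = 1 := hA.2.1 0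
  have trA1 : (A 1).trace = 1 := hA.2.1 1
  have hdsum : (∑ j, ∑ l, (A 0 j j * A 1 l l - A 0 j l * A 1 l j))
      = (A 0).trace * (A 1).trace - (A 0 * A 1).trace := by
    have e1 : (A 0).trace * (A 1).trace = ∑ j, ∑ l, A 0 j j * A 1 l l := by
      rw [Matrix.trace, Matrix.trace, Finset.sum_mul_sum]
      rfl
    have e2 : (A 0 * A 1).trace = ∑ j : Fin (m+2), ∑ l : Fin (m+2), A 0 j l * A 1 l j := by
      rw [Matrix.trace]
      exact Finset.sum_congr rfl (fun j _ => by rw [Matrix.diag]; exact Matrix.mul_apply)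
    simp only [Finset.sum_sub_distrib]
    rw [e1, e2]
  rw [hdsum, trA0, trA1, one_mul]
  -- Step 5: A 1 in terms of A 0
  have hA1 : A 1 = 1 - ((m : ℂ) * k) • 1 - A 0 := by
    have hs := hA.2.2
    rw [Fin.sum_univ_succ, Fin.sum_univ_succ] at hs
    rw [Finset.sum_congr rfl (fun i _ => htail' i), Finset.sum_const, Finset.card_univ,
      Fintype.card_fin, Fin.succ_zero_eq_one] at hs
    have : (m : ℕ) • (k • (1 : Matrix (Fin (m+2)) (Fin (m+2)) ℂ)) = ((m : ℂ) * k) • 1 := by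
      rw [← Nat.cast_smul_eq_nsmul ℂ, smul_smul]
    rw [this] at hs
    calc A 1 = A 0 + (A 1 + ((m:ℂ) * k) • 1) - ((m:ℂ) * k) • 1 - A 0 := by abel
    _ = 1 - ((m:ℂ) * k) • 1 - A 0 := by rw [hs]
  rw [hA1]
  have hstar : star k = k := by
    rw [hk, star_inv₀]
    norm_num
  have hherm : (A 0 - k • 1)ᴴ = A 0 - k • (1 : Matrix (Fin (m+2)) (Fin (m+2)) ℂ) := by
    rw [Matrix.conjTranspose_sub, (hA.1 0).1, Matrix.conjTranspose_smul,
      Matrix.conjTranspose_one, hstar]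
  rw [hherm]
  have exp1 : A 0 * (1 - ((m:ℂ) * k) • 1 - A 0)
      = A 0 - ((m:ℂ) * k) • A 0 - A 0 * A 0 := by
    rw [mul_sub, mul_sub, mul_one, Matrix.mul_smul, mul_one]
  have exp2 : (A 0 - k • 1) * (A 0 - k • (1 : Matrix (Fin (m+2)) (Fin (m+2)) ℂ))
      = A 0 * A 0 - k • A 0 - k • A 0 + (k * k) • 1 := by
    rw [sub_mul, mul_sub, mul_sub]
    simp only [Matrix.mul_smul, Matrix.smul_mul, one_mul, mul_one, smul_smul]
    abel
  rw [exp1, exp2]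
  simp only [Matrix.trace_sub, Matrix.trace_add, Matrix.trace_smul, Matrix.trace_one,
    trA0, smul_eq_mul, Fintype.card_fin]
  set t : ℂ := (A 0 * A 0).trace with ht
  have hfact : ((m+2) ! : ℂ) = ((m+2 : ℕ) : ℂ) * (((m+1 : ℕ)) : ℂ) * (m ! : ℂ) := by
    rw [show (m+2)! = (m+2) * ((m+1) * m !) from by rw [Nat.factorial_succ, Nat.factorial_succ]]
    push_cast
    ring
  push_cast [hfact]
  rw [hk]
  push_cast
  have hN2 : (m : ℂ) + 2 ≠ 0 := by exact_mod_cast (by omega : m + 2 ≠ 0)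
  simp only [inv_pow]
  field_simp
  ring

/-- For a doubly stochastic tuple `A = (A₁, A₂, (1/n)I, …, (1/n)I)` (so that `A₁, A₂` are
positive semidefinite with trace `1` and `A₁ + A₂ = (2/n)I`), the mixed discriminant equals
`n!/nⁿ + ((n-2)!/n^{n-2}) · tr((A₁ - (1/n)I)(A₁ - (1/n)I)*)`. -/
theorem mixedDisc_two_perturbed_identity {n : ℕ} (hn : 2 ≤ n)
    (A : Fin n → Matrix (Fin n) (Fin n) ℂ)
    (hA : DoublyStochasticTuple A)
    (htail : ∀ i : Fin n, 2 ≤ (i : ℕ) →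
      A i = (n : ℂ)⁻¹ • (1 : Matrix (Fin n) (Fin n) ℂ)) :
    mixedDisc A =
      (((n ! : ℝ) / (n : ℝ) ^ n : ℝ) : ℂ) +
        ((((n - 2)! : ℝ) / (n : ℝ) ^ (n - 2) : ℝ) : ℂ) *
          ((A ⟨0, by omega⟩ - (n : ℂ)⁻¹ • (1 : Matrix (Fin n) (Fin n) ℂ)) *
            (A ⟨0, by omega⟩ - (n : ℂ)⁻¹ • (1 : Matrix (Fin n) (Fin n) ℂ))ᴴ).trace := by
  obtain ⟨m, rfl⟩ : ∃ m, n = m + 2 := ⟨n - 2, by omega⟩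
  have h0 : (⟨0, by omega⟩ : Fin (m+2)) = 0 := rfl
  simp only [mixedDisc, h0, Nat.add_sub_cancel]
  exact mixedDisc_main A hA htail
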